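/- Let g : ℤ → ℂ have period q (q a positive integer). The series ∑_{n≥1} g(n)/n converges if and only if ∑_{r=1}^{q} g(r) = 0, and in that case its sum equals −(1/q) ∑_{r=1}^{q} g(r)·ψ(r/q). -/

import Mathlib

open Filter Topology

/-- The digamma function `ψ = Γ'/Γ`, as the derivative of `log Γ`. -/
noncomputable def digamma (x : ℝ) : ℝ := deriv (fun y => Real.log (Real.Gamma y)) x

lemma tendsto_digamma_aux {x : ℝ} (hx : 0 < x) :
    Tendsto (fun N : ℕ => Real.log N - ∑ m ∈ Finset.range N, 1 / (x + m)) atTop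
      (𝓝 (digamma x)) := by
  set f : ℝ → ℝ := fun y => Real.log (Real.Gamma y) with hf
  have hc : ConvexOn ℝ (Set.Ioi 0) f := Real.convexOn_log_Gamma
  have h_rec : ∀ y : ℝ, 0 < y → f (y + 1) = f y + Real.log y := by
    intro y hy
    simp only [hf, Real.Gamma_add_one hy.ne',
      Real.log_mul hy.ne' (Real.Gamma_pos_of_pos hy).ne', add_comm]
  have hder : ∀ {y : ℝ}, 0 < y → DifferentiableAt ℝ f y := by
    intro y hy
    refine ((Real.differentiableAt_Gamma ?_).log (Real.Gamma_ne_zero ?_)) <;>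
      exact fun m => ne_of_gt (lt_of_le_of_lt (neg_nonpos.mpr m.cast_nonneg) hy)
  have hder_rec : ∀ y : ℝ, 0 < y → deriv f (y + 1) = deriv f y + 1 / y := by
    intro y hy
    rw [← deriv_comp_add_const, one_div, ← Real.deriv_log,
      ← deriv_add (hder (by positivity)) (Real.differentiableAt_log hy.ne')]
    apply Filter.EventuallyEq.deriv_eq
    filter_upwards [eventually_gt_nhds hy] using h_rec
  have hsum : ∀ N : ℕ, deriv f (x + N) = deriv f x + ∑ m ∈ Finset.range N, 1 / (x + m) := by
    intro N
    induction N with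
    | zero => simp
    | succ n ih =>
        have : (x + (n + 1) : ℝ) = (x + n) + 1 := by ring
        rw [Finset.sum_range_succ, ← add_assoc, ← ih,
          show ((n + 1 : ℕ) : ℝ) = (n : ℝ) + 1 by push_cast; ring,
          show x + ((n : ℝ) + 1) = (x + n) + 1 by ring, hder_rec (x + n) (by positivity)]
  have derivUB : ∀ y : ℝ, 0 < y → deriv f y ≤ Real.log y := by
    intro y hy
    have hs : slope f y (y + 1) = Real.log y := by
      rw [slope_def_field, h_rec y hy, show y + 1 - y = (1:ℝ) by ring, div_one,
        add_sub_cancel_left]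
    have h := hc.deriv_le_slope (Set.mem_Ioi.mpr hy)
      (Set.mem_Ioi.mpr (show (0:ℝ) < y + 1 by linarith))
      (show y < y + 1 by linarith) (hder hy)
    rwa [hs] at h
  have derivLB : ∀ y : ℝ, 1 < y → Real.log (y - 1) ≤ deriv f y := by
    intro y hy
    have hs : slope f (y - 1) y = Real.log (y - 1) := by
      have h' := h_rec (y - 1) (by linarith)
      rw [sub_add_cancel] at h'
      rw [slope_def_field, h', show y - (y - 1) = (1:ℝ) by ring, div_one, add_sub_cancel_left]
    have h := hc.slope_le_deriv (Set.mem_Ioi.mpr (show (0:ℝ) < y - 1 by linarith))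
      (Set.mem_Ioi.mpr (show (0:ℝ) < y by linarith))
      (show y - 1 < y by linarith) (hder (show (0:ℝ) < y by linarith))
    rwa [hs] at h
  have hkey : ∀ N : ℕ, Real.log N - ∑ m ∈ Finset.range N, 1 / (x + m)
      = deriv f x + (Real.log N - deriv f (x + N)) := by
    intro N; rw [hsum]; ring
  have hdig : digamma x = deriv f x := rfl
  rw [hdig, show deriv f x = deriv f x + 0 by ring]
  simp only [hkey]
  refine Filter.Tendsto.const_add _ ?_
  -- squeeze
  have h1 : Tendsto (fun N : ℕ => Real.log N - Real.log (x + N)) atTop (𝓝 0) := by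
    have hr : Tendsto (fun N : ℕ => (N : ℝ) / (x + N)) atTop (𝓝 1) := by
      have : Tendsto (fun N : ℕ => x / (x + N)) atTop (𝓝 0) :=
        Filter.Tendsto.div_atTop tendsto_const_nhds
          (tendsto_atTop_add_const_left _ x tendsto_natCast_atTop_atTop)
      have h2 := (tendsto_const_nhds (x := (1:ℝ))).sub this
      rw [sub_zero] at h2
      refine h2.congr' ?_
      filter_upwards [eventually_gt_atTop 0] with N hN
      have : (x + N : ℝ) ≠ 0 := by positivity
      field_simp
      ring
    have := (Real.continuousAt_log one_ne_zero).tendsto.comp hr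
    rw [Real.log_one] at this
    refine this.congr' ?_
    filter_upwards [eventually_gt_atTop 0] with N hN
    rw [Function.comp_apply, Real.log_div (by positivity) (by positivity)]
  have h2 : Tendsto (fun N : ℕ => Real.log N - Real.log (x + N - 1)) atTop (𝓝 0) := by
    have hr : Tendsto (fun N : ℕ => (N : ℝ) / (x + N - 1)) atTop (𝓝 1) := by
      have hat : Tendsto (fun N : ℕ => x + (N : ℝ) - 1) atTop atTop := by
        have := tendsto_atTop_add_const_left _ x tendsto_natCast_atTop_atTop
        exact tendsto_atTop_add_const_right _ (-1) this |>.congr (by intro N; ring)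
      have : Tendsto (fun N : ℕ => (1 - x) / (x + N - 1)) atTop (𝓝 0) :=
        Filter.Tendsto.div_atTop tendsto_const_nhds hat
      have h2 := (tendsto_const_nhds (x := (1:ℝ))).add this
      rw [add_zero] at h2
      refine h2.congr' ?_
      filter_upwards [hat.eventually_gt_atTop 0] with N hN
      have : (x + N - 1 : ℝ) ≠ 0 := ne_of_gt hN
      field_simp
      ring
    have := (Real.continuousAt_log one_ne_zero).tendsto.comp hr
    rw [Real.log_one] at this
    refine this.congr' ?_
    filter_upwards [(tendsto_atTop_add_const_left _ x
      tendsto_natCast_atTop_atTop).eventually_gt_atTop 1, eventually_gt_atTop 0] with N hN hN0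
    rw [Function.comp_apply, Real.log_div (by positivity) (by linarith)]
  refine tendsto_of_tendsto_of_tendsto_of_le_of_le' h1 h2 ?_ ?_
  · filter_upwards [(tendsto_atTop_add_const_left _ x
      tendsto_natCast_atTop_atTop).eventually_gt_atTop 1] with N hN
    have := derivUB (x + N) (by linarith)
    linarith
  · filter_upwards [(tendsto_atTop_add_const_left _ x
      tendsto_natCast_atTop_atTop).eventually_gt_atTop 1] with N hN
    have := derivLB (x + N) hN
    linarith


theorem periodic_series_converges_iff (q : ℕ) (hq : 0 < q) (g : ℤ → ℂ)
    (hper : ∀ n : ℤ, g (n + q) = g n) :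
    ((∃ L : ℂ, Tendsto (fun N : ℕ => ∑ n ∈ Finset.Icc 1 N, g n / n) atTop (𝓝 L)) ↔
      ∑ r ∈ Finset.Icc 1 q, g r = 0) ∧
    (∑ r ∈ Finset.Icc 1 q, g r = 0 →
      Tendsto (fun N : ℕ => ∑ n ∈ Finset.Icc 1 N, g n / n) atTop
        (𝓝 (-(1 / (q : ℂ)) * ∑ r ∈ Finset.Icc 1 q, g r * (digamma ((r : ℝ) / q) : ℂ)))) := by
  have hq0 : (q : ℂ) ≠ 0 := Nat.cast_ne_zero.mpr hq.ne'
  have hq0' : (q : ℝ) ≠ 0 := Nat.cast_ne_zero.mpr hq.ne'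
  set P : ℕ → ℂ := fun N => ∑ n ∈ Finset.Icc 1 N, g n / n with hP
  set S : ℂ := ∑ r ∈ Finset.Icc 1 q, g r with hS
  have hIcc : ∀ M : ℕ, Finset.Icc 1 M = Finset.Ioc 0 M := by
    intro M; ext x; simp only [Finset.mem_Icc, Finset.mem_Ioc]; omega
  have hper' : ∀ (m : ℕ) (n : ℤ), g (n + (m : ℤ) * (q : ℤ)) = g n := by
    intro m
    induction m with
    | zero => simp
    | succ k ih =>
        intro n
        have h : (n + ((k + 1 : ℕ) : ℤ) * (q : ℤ)) = (n + (k : ℤ) * (q : ℤ)) + (q : ℤ) := by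
          push_cast; ring
        rw [h, hper, ih]
  -- reindexing a block of length q
  have hblockstep : ∀ (k : ℕ) (F : ℕ → ℂ), ∑ n ∈ Finset.Ioc (k * q) (k * q + q), F n
      = ∑ r ∈ Finset.Icc 1 q, F (k * q + r) := by
    intro k F
    calc ∑ n ∈ Finset.Ioc (k * q) (k * q + q), F n
        = ∑ n ∈ (Finset.Ioc 0 q).map (addLeftEmbedding (k * q)), F n := by
          rw [Finset.map_add_left_Ioc, add_zero]
      _ = ∑ r ∈ Finset.Ioc 0 q, F (k * q + r) := by
          rw [Finset.sum_map]; rfl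
      _ = ∑ r ∈ Finset.Icc 1 q, F (k * q + r) := by rw [hIcc]
  have hblock : ∀ N : ℕ, P (N * q)
      = ∑ m ∈ Finset.range N, ∑ r ∈ Finset.Icc 1 q, g r / ((m : ℂ) * q + r) := by
    intro N
    induction N with
    | zero => simp [hP]
    | succ k ih =>
        have h1 : P ((k + 1) * q) = P (k * q) + ∑ n ∈ Finset.Ioc (k * q) (k * q + q), g n / n := by
          rw [hP]
          simp only
          rw [hIcc, hIcc, ← Finset.sum_Ioc_consecutive _ (Nat.zero_le _)
            (Nat.mul_le_mul_right q (Nat.le_succ k)), Nat.succ_mul]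
        rw [h1, hblockstep k (fun n => g n / n), ih, Finset.sum_range_succ]
        congr 1
        refine Finset.sum_congr rfl fun r hr => ?_
        have h2 : ((k * q + r : ℕ) : ℤ) = (r : ℤ) + (k : ℤ) * (q : ℤ) := by push_cast; ring
        rw [h2, hper' k (r : ℤ)]
        congr 1
        push_cast; ring
  set T : ℕ → ℕ → ℂ := fun r N => ∑ m ∈ Finset.range N, 1 / ((m : ℂ) * q + r) with hT
  have hswap : ∀ N : ℕ, P (N * q) = ∑ r ∈ Finset.Icc 1 q, g r * T r N := by
    intro N
    rw [hblock N, Finset.sum_comm]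
    refine Finset.sum_congr rfl fun r hr => ?_
    rw [hT]
    simp only
    rw [Finset.mul_sum]
    exact Finset.sum_congr rfl fun m _ => by rw [div_eq_mul_one_div]
  -- the limit of log N / q - T r N
  have hTlim : ∀ r ∈ Finset.Icc 1 q, Tendsto (fun N : ℕ => (Real.log N : ℂ) / q - T r N) atTop
      (𝓝 ((digamma ((r : ℝ) / q) / q : ℝ) : ℂ)) := by
    intro r hr
    have hr1 : 1 ≤ r := (Finset.mem_Icc.mp hr).1
    have hrpos : 0 < (r : ℝ) / q := by
      apply div_pos _ (by positivity)
      exact_mod_cast hr1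
    have h0 := (tendsto_digamma_aux hrpos).div_const (q : ℝ)
    have h1 : Tendsto (fun N : ℕ => Real.log N / q - ∑ m ∈ Finset.range N, 1 / ((m : ℝ) * q + r))
        atTop (𝓝 (digamma ((r : ℝ) / q) / q)) := by
      refine h0.congr fun N => ?_
      rw [sub_div, Finset.sum_div]
      congr 1
      refine Finset.sum_congr rfl fun m _ => ?_
      rw [div_div]
      congr 1
      field_simp
      ring
    have h2 := (Complex.continuous_ofReal.tendsto _).comp h1
    refine h2.congr fun N => ?_
    simp only [Function.comp_apply, hT]
    push_cast
    ring
  set Einf : ℂ := ∑ r ∈ Finset.Icc 1 q, g r * ((digamma ((r : ℝ) / q) / q : ℝ) : ℂ) with hEinf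
  have hE : Tendsto (fun N : ℕ => ∑ r ∈ Finset.Icc 1 q, g r * ((Real.log N : ℂ) / q - T r N))
      atTop (𝓝 Einf) :=
    tendsto_finset_sum _ fun r hr => (hTlim r hr).const_mul _
  have hval : Einf = (1 / (q : ℂ)) * ∑ r ∈ Finset.Icc 1 q, g r * (digamma ((r : ℝ) / q) : ℂ) := by
    rw [hEinf, Finset.mul_sum]
    refine Finset.sum_congr rfl fun r _ => ?_
    push_cast
    field_simp
  -- part 2
  have key : S = 0 → Tendsto P atTop
      (𝓝 (-(1 / (q : ℂ)) * ∑ r ∈ Finset.Icc 1 q, g r * (digamma ((r : ℝ) / q) : ℂ))) := by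
    intro hS0
    have hpt : ∀ N : ℕ, P (N * q)
        = -∑ r ∈ Finset.Icc 1 q, g r * ((Real.log N : ℂ) / q - T r N) := by
      intro N
      have h : ∑ r ∈ Finset.Icc 1 q, g r * ((Real.log N : ℂ) / q - T r N)
          = ((Real.log N : ℂ) / q) * S - ∑ r ∈ Finset.Icc 1 q, g r * T r N := by
        rw [hS, Finset.mul_sum, ← Finset.sum_sub_distrib]
        exact Finset.sum_congr rfl fun r _ => by ring
      rw [hswap N, h, hS0]
      ring
    have hPq : Tendsto (fun N : ℕ => P (N * q)) atTop (𝓝 (-Einf)) :=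
      hE.neg.congr fun N => (hpt N).symm
    -- pass from multiples of q to all N
    have hNdiv : Tendsto (fun N : ℕ => N / q) atTop atTop := by
      refine tendsto_atTop.mpr fun b => ?_
      filter_upwards [eventually_ge_atTop (b * q)] with N hN
      exact (Nat.le_div_iff_mul_le hq).mpr hN
    have hcomp : Tendsto (fun N : ℕ => P (q * (N / q))) atTop (𝓝 (-Einf)) := by
      refine (hPq.comp hNdiv).congr fun N => ?_
      simp only [Function.comp_apply, Nat.mul_comm]
    -- bound on g
    set B : ℝ := ∑ r ∈ Finset.Icc 1 q, ‖g r‖ with hB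
    have hgb : ∀ n : ℕ, 1 ≤ n → ‖g n‖ ≤ B := by
      intro n hn
      obtain ⟨k, m, hm, hkm⟩ : ∃ k m, m < q ∧ n - 1 = q * k + m :=
        ⟨(n - 1) / q, (n - 1) % q, Nat.mod_lt _ hq, (Nat.div_add_mod (n - 1) q).symm⟩
      have hr1 : 1 ≤ m + 1 ∧ m + 1 ≤ q ∧ n = q * k + (m + 1) := by omega
      have hgn : g n = g (m + 1 : ℕ) := by
        have h3 : ((n : ℕ) : ℤ) = ((m + 1 : ℕ) : ℤ) + (k : ℤ) * (q : ℤ) := by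
          have := hr1.2.2
          push_cast [this]
          ring
        rw [h3, hper' k ((m + 1 : ℕ) : ℤ)]
      rw [hgn, hB]
      have hmem : (m + 1 : ℕ) ∈ Finset.Icc 1 q := Finset.mem_Icc.mpr ⟨hr1.1, hr1.2.1⟩
      exact Finset.single_le_sum (f := fun r : ℕ => ‖g (r : ℤ)‖) (fun i _ => norm_nonneg _) hmem
    have hBnn : 0 ≤ B := Finset.sum_nonneg fun i _ => norm_nonneg _
    have htail : Tendsto (fun N : ℕ => P N - P (q * (N / q))) atTop (𝓝 0) := by
      apply tendsto_zero_iff_norm_tendsto_zero.mpr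
      have hbound : ∀ N : ℕ, ‖P N - P (q * (N / q))‖ ≤ (q : ℝ) * B / (((q * (N / q) : ℕ) : ℝ) + 1) := by
        intro N
        have hk : q * (N / q) ≤ N := Nat.mul_div_le N q
        have hdiff : P N - P (q * (N / q)) = ∑ n ∈ Finset.Ioc (q * (N / q)) N, g n / n := by
          rw [hP]
          simp only
          rw [hIcc, hIcc, ← Finset.sum_Ioc_consecutive _ (Nat.zero_le _) hk]
          ring
        rw [hdiff]
        have hden : (0 : ℝ) < ((q * (N / q) : ℕ) : ℝ) + 1 := by positivity
        calc ‖∑ n ∈ Finset.Ioc (q * (N / q)) N, g n / n‖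
            ≤ ∑ n ∈ Finset.Ioc (q * (N / q)) N, ‖g n / (n : ℂ)‖ := norm_sum_le _ _
          _ ≤ ∑ n ∈ Finset.Ioc (q * (N / q)) N, B / (((q * (N / q) : ℕ) : ℝ) + 1) := by
              refine Finset.sum_le_sum fun n hn => ?_
              rw [Finset.mem_Ioc] at hn
              have hn1 : 1 ≤ n := by omega
              rw [norm_div]
              have hnormn : ‖(n : ℂ)‖ = (n : ℝ) := by
                rw [Complex.norm_natCast]
              rw [hnormn]
              apply div_le_div₀ hBnn (hgb n hn1) hden
              exact_mod_cast Nat.succ_le_of_lt hn.1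
          _ = (Finset.Ioc (q * (N / q)) N).card * (B / (((q * (N / q) : ℕ) : ℝ) + 1)) := by
              rw [Finset.sum_const, nsmul_eq_mul]
          _ ≤ (q : ℝ) * (B / (((q * (N / q) : ℕ) : ℝ) + 1)) := by
              apply mul_le_mul_of_nonneg_right _ (by positivity)
              rw [Nat.card_Ioc]
              have := Nat.div_add_mod N q
              have := Nat.mod_lt N hq
              have hcard : N - q * (N / q) ≤ q := by omega
              exact_mod_cast hcard
          _ = (q : ℝ) * B / (((q * (N / q) : ℕ) : ℝ) + 1) := by ring
      refine squeeze_zero (fun N => norm_nonneg _) hbound ?_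
      apply Tendsto.div_atTop tendsto_const_nhds
      apply tendsto_atTop_add_const_right
      have hnatlim : Tendsto (fun N : ℕ => q * (N / q)) atTop atTop := by
        refine tendsto_atTop.mpr fun b => ?_
        filter_upwards [hNdiv.eventually_ge_atTop b] with N hN
        calc b ≤ N / q := hN
          _ ≤ q * (N / q) := Nat.le_mul_of_pos_left _ hq
      exact tendsto_natCast_atTop_atTop.comp hnatlim
    have hfinal : Tendsto P atTop (𝓝 (-Einf)) := by
      have := hcomp.add htail
      rw [add_zero] at this
      exact this.congr fun N => by ring
    rw [hval, ← neg_mul] at hfinal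
    exact hfinal
  refine ⟨⟨?_, fun hS0 => ⟨_, key hS0⟩⟩, key⟩
  -- converse direction
  rintro ⟨L', hL'⟩
  by_contra hS0
  have hmul : Tendsto (fun N : ℕ => N * q) atTop atTop := by
    refine tendsto_atTop.mpr fun b => ?_
    filter_upwards [eventually_ge_atTop b] with N hN
    exact le_trans hN (Nat.le_mul_of_pos_right N hq)
  have h1 : Tendsto (fun N : ℕ => P (N * q)) atTop (𝓝 L') := hL'.comp hmul
  have h2 := h1.add hE
  have h3 : ∀ N : ℕ, P (N * q) + ∑ r ∈ Finset.Icc 1 q, g r * ((Real.log N : ℂ) / q - T r N)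
      = ((Real.log N : ℂ) / q) * S := by
    intro N
    rw [hswap N, ← Finset.sum_add_distrib, hS, Finset.mul_sum]
    exact Finset.sum_congr rfl fun r _ => by ring
  have h4 : Tendsto (fun N : ℕ => ((Real.log N : ℂ) / q) * S) atTop (𝓝 (L' + Einf)) :=
    h2.congr h3
  have h5 : Tendsto (fun N : ℕ => (Real.log N : ℂ)) atTop (𝓝 ((L' + Einf) * ((q : ℂ) / S))) := by
    refine (h4.mul_const ((q : ℂ) / S)).congr fun N => ?_
    field_simp
  have h6 : Tendsto (fun N : ℕ => Real.log N) atTop (𝓝 (((L' + Einf) * ((q : ℂ) / S)).re)) := by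
    have := (Complex.continuous_re.tendsto _).comp h5
    exact this.congr fun N => by simp only [Function.comp_apply, Complex.ofReal_re]
  exact absurd h6 (not_tendsto_nhds_of_tendsto_atTop
    (Real.tendsto_log_atTop.comp tendsto_natCast_atTop_atTop) _)
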